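/- Let Γ = Γ₁ *_Σ Γ₂ be a nontrivial amalgamated free product of countable groups, i.e. Σ embeds as a proper subgroup of both Γ₁ and Γ₂. Let π : Γ → O(ℓ²_ℝ(Γ/Σ)) be the quasi-regular orthogonal representation, given by permuting the left cosets: (π(g)f)(xΣ) = f(g⁻¹xΣ). Then there exists an unbounded 1-cocycle for π: a map c : Γ → ℓ²_ℝ(Γ/Σ) satisfying c(gh) = c(g) + π(g)c(h) for all g,h ∈ Γ, with sup_{g∈Γ} ‖c(g)‖ = ∞. -/

import Mathlib

namespace Stmt15Aux

open Monoid Monoid.PushoutI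

variable {B : Type*} [Group B] {G : Bool → Type*} [∀ i, Group (G i)]
variable (φ : ∀ i, B →* G i)

abbrev Q := Monoid.PushoutI φ ⧸ (Monoid.PushoutI.base φ).range

noncomputable def sm (g : Monoid.PushoutI φ) (v : Q φ →₀ ℝ) : Q φ →₀ ℝ :=
  Finsupp.equivMapDomain (MulAction.toPerm g) v

@[simp] lemma sm_apply (g : Monoid.PushoutI φ) (v : Q φ →₀ ℝ) (k : Q φ) :
    sm φ g v k = v (g⁻¹ • k) := rfl

lemma sm_single (g : Monoid.PushoutI φ) (q : Q φ) (r : ℝ) :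
    sm φ g (Finsupp.single q r) = Finsupp.single (g • q) r := by
  ext k
  classical
  simp [sm_apply, Finsupp.single_apply, eq_inv_smul_iff]

@[ext] structure P where
  v : Q φ →₀ ℝ
  g : Monoid.PushoutI φ

instance : One (P φ) := ⟨⟨0, 1⟩⟩
noncomputable instance : Mul (P φ) := ⟨fun x y => ⟨x.v + sm φ x.g y.v, x.g * y.g⟩⟩
noncomputable instance : Inv (P φ) := ⟨fun x => ⟨-(sm φ x.g⁻¹ x.v), x.g⁻¹⟩⟩

@[simp] lemma mul_v (x y : P φ) : (x * y).v = x.v + sm φ x.g y.v := rfl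
@[simp] lemma mul_g (x y : P φ) : (x * y).g = x.g * y.g := rfl
@[simp] lemma one_v : (1 : P φ).v = 0 := rfl
@[simp] lemma one_g : (1 : P φ).g = 1 := rfl
@[simp] lemma inv_v (x : P φ) : (x⁻¹).v = -(sm φ x.g⁻¹ x.v) := rfl
@[simp] lemma inv_g (x : P φ) : (x⁻¹).g = x.g⁻¹ := rfl

noncomputable instance : Group (P φ) where
  mul_assoc x y z := by
    ext k
    · simp [mul_smul, add_assoc]
    · simp [mul_assoc]
  one_mul x := by ext k <;> simp
  mul_one x := by ext k <;> simp
  inv_mul_cancel x := by ext k <;> simp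


/-- projection -/
def Psnd : P φ →* Monoid.PushoutI φ where
  toFun := P.g
  map_one' := rfl
  map_mul' _ _ := rfl

noncomputable def ee : Q φ := QuotientGroup.mk 1

lemma smul_ee (x : Monoid.PushoutI φ) : x • ee φ = QuotientGroup.mk x := by
  simp [ee, MulAction.Quotient.smul_mk]

noncomputable def dd (q : Q φ) : Q φ →₀ ℝ := Finsupp.single q 1

lemma sm_sub (g : Monoid.PushoutI φ) (v w : Q φ →₀ ℝ) :
    sm φ g (v - w) = sm φ g v - sm φ g w := by
  ext k; simp

lemma sm_dd (g : Monoid.PushoutI φ) (q : Q φ) : sm φ g (dd φ q) = dd φ (g • q) :=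
  sm_single φ g q 1

noncomputable def fmap : ∀ i : Bool, G i →* P φ
  | false =>
    { toFun := fun x => ⟨0, Monoid.PushoutI.of (φ := φ) false x⟩
      map_one' := by ext k <;> simp
      map_mul' := fun x y => by ext k <;> simp }
  | true =>
    { toFun := fun x => ⟨dd φ (ee φ) - dd φ ((Monoid.PushoutI.of (φ := φ) true x) • ee φ),
        Monoid.PushoutI.of (φ := φ) true x⟩
      map_one' := by ext k <;> simp
      map_mul' := fun x y => by
        refine P.ext ?_ (by simp)
        show dd φ (ee φ) - dd φ (_ • ee φ) = _
        rw [mul_v, map_mul, sm_sub, sm_dd, sm_dd, mul_smul]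
        exact (sub_add_sub_cancel _ _ _).symm }


noncomputable def kb : B →* P φ where
  toFun := fun b => ⟨0, Monoid.PushoutI.base φ b⟩
  map_one' := by ext k <;> simp
  map_mul' := fun x y => by ext k <;> simp

lemma base_smul_ee (b : B) : (Monoid.PushoutI.base φ b) • ee φ = ee φ := by
  rw [smul_ee, ee, QuotientGroup.eq]
  simpa using ⟨b, rfl⟩

lemma compat : ∀ i, (fmap φ i).comp (φ i) = kb φ := by
  intro i
  cases i <;> ext b <;>
    simp [fmap, kb, Monoid.PushoutI.of_apply_eq_base, base_smul_ee]

noncomputable def psi : Monoid.PushoutI φ →* P φ :=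
  Monoid.PushoutI.lift (fmap φ) (kb φ) (compat φ)

lemma psi_g (x : Monoid.PushoutI φ) : (psi φ x).g = x := by
  have : (Psnd φ).comp (psi φ) = MonoidHom.id _ := by
    apply Monoid.PushoutI.hom_ext
    · intro i
      ext g
      cases i <;> simp [psi, Psnd, fmap]
    · ext b
      simp [psi, Psnd, kb]
  exact DFunLike.congr_fun this x

noncomputable def cv (x : Monoid.PushoutI φ) : Q φ →₀ ℝ := (psi φ x).v

lemma cv_mul (x y : Monoid.PushoutI φ) :
    cv φ (x * y) = cv φ x + sm φ x (cv φ y) := by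
  have : psi φ (x * y) = psi φ x * psi φ y := map_mul _ _ _
  rw [cv, this, mul_v, psi_g]; rfl

lemma cv_one : cv φ 1 = 0 := by
  simp [cv]

lemma cv_cocycle (x y : Monoid.PushoutI φ) (k : Q φ) :
    cv φ (x * y) k = cv φ x k + cv φ y (x⁻¹ • k) := by
  rw [cv_mul]; simp

lemma cv_a (x : G false) : cv φ (Monoid.PushoutI.of (φ := φ) false x) = 0 := by
  simp [cv, psi, fmap]

lemma cv_b (x : G true) : cv φ (Monoid.PushoutI.of (φ := φ) true x) =
    dd φ (ee φ) - dd φ ((Monoid.PushoutI.of (φ := φ) true x) • ee φ) := by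
  simp [cv, psi]; rfl


section Words

variable {φ}
variable (a0 : G false) (b0 : G true)

/-- the alternating letter -/
def letter : Bool → Σ i, G i
  | false => ⟨false, a0⟩
  | true => ⟨true, b0⟩

@[simp] lemma letter_fst (s : Bool) : (letter a0 b0 s).1 = s := by cases s <;> rfl

/-- alternating list of letters, starting with the letter of sort `s` -/
def altL (s : Bool) : ℕ → List (Σ i, G i)
  | 0 => []
  | n + 1 => letter a0 b0 s :: altL (!s) n

lemma altL_mem : ∀ (n : ℕ) (s : Bool) (l : Σ i, G i), l ∈ altL a0 b0 s n →
    l = letter a0 b0 false ∨ l = letter a0 b0 true := by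
  intro n
  induction n with
  | zero => intro s l h; simp [altL] at h
  | succ m ih =>
    intro s l h
    rw [altL, List.mem_cons] at h
    rcases h with h | h
    · cases s
      · exact Or.inl h
      · exact Or.inr h
    · exact ih _ _ h

lemma altL_head? : ∀ (n : ℕ) (s : Bool), n ≠ 0 →
    (altL a0 b0 s n).head? = some (letter a0 b0 s) := by
  intro n s h
  cases n with
  | zero => omega
  | succ m => rfl

lemma altL_chain : ∀ (n : ℕ) (s : Bool),
    (altL a0 b0 s n).Chain' (fun l l' => l.1 ≠ l'.1) := by
  intro n
  induction n with
  | zero => intro s; exact List.isChain_nil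
  | succ m ih =>
    intro s
    rw [altL, List.Chain', List.isChain_cons]
    refine ⟨?_, ih _⟩
    intro y hy
    cases m with
    | zero => simp [altL] at hy
    | succ m' =>
      rw [altL_head? a0 b0 _ _ (by omega)] at hy
      cases hy
      simp [letter_fst]

variable (ha : a0 ∉ (φ false).range) (hb : b0 ∉ (φ true).range)

include ha hb in
lemma altL_ne_one : ∀ (n : ℕ) (s : Bool) (l : (Σ i, G i)), l ∈ altL a0 b0 s n → l.2 ≠ 1 := by
  intro n s l hl
  rcases altL_mem a0 b0 n s l hl with rfl | rfl
  · simp only [letter]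
    intro h1; exact ha (h1 ▸ one_mem _)
  · simp only [letter]
    intro h1; exact hb (h1 ▸ one_mem _)

include ha hb in
lemma altL_reduced (n : ℕ) (s : Bool) :
    ∀ l ∈ altL a0 b0 s n, l.2 ∉ (φ l.1).range := by
  intro l hl
  rcases altL_mem a0 b0 n s l hl with rfl | rfl
  · exact ha
  · exact hb

variable (φ) in
/-- product in the pushout of the alternating word -/
noncomputable def prodAlt (s : Bool) (n : ℕ) : Monoid.PushoutI φ :=
  ((altL a0 b0 s n).map (fun l => Monoid.PushoutI.of (φ := φ) l.1 l.2)).prod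

lemma prodAlt_zero (s : Bool) : prodAlt φ a0 b0 s 0 = 1 := rfl

lemma prodAlt_succ (s : Bool) (n : ℕ) :
    prodAlt φ a0 b0 s (n + 1) =
      Monoid.PushoutI.of (φ := φ) (letter a0 b0 s).1 (letter a0 b0 s).2 *
        prodAlt φ a0 b0 (!s) n := by
  simp [prodAlt, altL]

include ha hb in
lemma prodAlt_not_mem (hinj : ∀ i, Function.Injective (φ i)) (s : Bool) (n : ℕ) (hn : n ≠ 0) :
    prodAlt φ a0 b0 s n ∉ (Monoid.PushoutI.base φ).range := by
  intro hmem
  set w : Monoid.CoprodI.Word G :=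
    ⟨altL a0 b0 s n, altL_ne_one a0 b0 ha hb n s, altL_chain a0 b0 n s⟩ with hw
  have hred : Monoid.PushoutI.Reduced φ w := altL_reduced a0 b0 ha hb n s
  have hprod : Monoid.PushoutI.ofCoprodI (φ := φ) w.prod = prodAlt φ a0 b0 s n := by
    rw [Monoid.CoprodI.Word.prod, map_list_prod, List.map_map, prodAlt]
    refine congrArg List.prod (List.map_congr_left ?_)
    intro l _
    simp [Monoid.PushoutI.ofCoprodI_of]
  rw [← hprod] at hmem
  have := Monoid.PushoutI.Reduced.eq_empty_of_mem_range hinj hred hmem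
  have hlist : altL a0 b0 s n = [] := congrArg (fun w => Monoid.CoprodI.Word.toList w) this
  cases n with
  | zero => omega
  | succ m => simp [altL] at hlist

end Words


section Main

variable {φ}
variable (a0 : G false) (b0 : G true)

variable (φ) in
noncomputable def elA : Monoid.PushoutI φ := Monoid.PushoutI.of (φ := φ) false a0

variable (φ) in
noncomputable def elB : Monoid.PushoutI φ := Monoid.PushoutI.of (φ := φ) true b0

lemma prodAlt_succ_false (n : ℕ) :
    prodAlt φ a0 b0 false (n + 1) = elA φ a0 * prodAlt φ a0 b0 true n := by
  rw [prodAlt_succ]; rfl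

lemma prodAlt_succ_true (n : ℕ) :
    prodAlt φ a0 b0 true (n + 1) = elB φ b0 * prodAlt φ a0 b0 false n := by
  rw [prodAlt_succ]; rfl

lemma semiA (m : ℕ) :
    elA φ a0 * (elB φ b0 * elA φ a0) ^ m = (elA φ a0 * elB φ b0) ^ m * elA φ a0 := by
  have h : SemiconjBy (elA φ a0) (elB φ b0 * elA φ a0) (elA φ a0 * elB φ b0) := by
    simp [SemiconjBy, mul_assoc]
  exact (h.pow_right m).eq

lemma semiB (m : ℕ) :
    elB φ b0 * (elA φ a0 * elB φ b0) ^ m = (elB φ b0 * elA φ a0) ^ m * elB φ b0 := by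
  have h : SemiconjBy (elB φ b0) (elA φ a0 * elB φ b0) (elB φ b0 * elA φ a0) := by
    simp [SemiconjBy, mul_assoc]
  exact (h.pow_right m).eq

lemma prodAlt_formula (n : ℕ) :
    prodAlt φ a0 b0 false (2*n) = (elA φ a0 * elB φ b0) ^ n ∧
    prodAlt φ a0 b0 false (2*n+1) = (elA φ a0 * elB φ b0) ^ n * elA φ a0 ∧
    prodAlt φ a0 b0 true (2*n) = (elB φ b0 * elA φ a0) ^ n ∧
    prodAlt φ a0 b0 true (2*n+1) = (elB φ b0 * elA φ a0) ^ n * elB φ b0 := by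
  induction n with
  | zero =>
    refine ⟨by simp [prodAlt_zero], ?_, by simp [prodAlt_zero], ?_⟩
    · rw [show 2*0+1 = 0+1 from rfl, prodAlt_succ_false, prodAlt_zero]
      simp
    · rw [show 2*0+1 = 0+1 from rfl, prodAlt_succ_true, prodAlt_zero]
      simp
  | succ m ih =>
    obtain ⟨hD, hA, hB, hC⟩ := ih
    have hB' : prodAlt φ a0 b0 true (2*(m+1)) = (elB φ b0 * elA φ a0) ^ (m+1) := by
      rw [show 2*(m+1) = (2*m+1)+1 by ring, prodAlt_succ_true, hA, ← mul_assoc, semiB,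
        pow_succ, mul_assoc]
    have hD' : prodAlt φ a0 b0 false (2*(m+1)) = (elA φ a0 * elB φ b0) ^ (m+1) := by
      rw [show 2*(m+1) = (2*m+1)+1 by ring, prodAlt_succ_false, hC, ← mul_assoc, semiA,
        pow_succ, mul_assoc]
    refine ⟨hD', ?_, hB', ?_⟩
    · rw [show 2*(m+1)+1 = (2*(m+1))+1 from rfl, prodAlt_succ_false, hB', semiA]
    · rw [show 2*(m+1)+1 = (2*(m+1))+1 from rfl, prodAlt_succ_true, hD', semiB]

variable (ha : a0 ∉ (φ false).range) (hb : b0 ∉ (φ true).range)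
  (hinj : ∀ i, Function.Injective (φ i))

include ha hb hinj

lemma notmem_BA (d : ℕ) (hd : d ≠ 0) :
    (elB φ b0 * elA φ a0) ^ d ∉ (Monoid.PushoutI.base φ).range := by
  rw [← (prodAlt_formula a0 b0 d).2.2.1]
  exact prodAlt_not_mem a0 b0 ha hb hinj _ _ (by omega)

lemma notmem_ABA (d : ℕ) :
    (elA φ a0 * elB φ b0) ^ d * elA φ a0 ∉ (Monoid.PushoutI.base φ).range := by
  rw [← (prodAlt_formula a0 b0 d).2.1]
  exact prodAlt_not_mem a0 b0 ha hb hinj _ _ (by omega)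

lemma notmem_BAB (d : ℕ) :
    (elB φ b0 * elA φ a0) ^ d * elB φ b0 ∉ (Monoid.PushoutI.base φ).range := by
  rw [← (prodAlt_formula a0 b0 d).2.2.2]
  exact prodAlt_not_mem a0 b0 ha hb hinj _ _ (by omega)

variable (φ) in
/-- the cosets `(ab)^m a Σ` -/
noncomputable def qq (m : ℕ) : Q φ := ((elA φ a0 * elB φ b0) ^ m * elA φ a0) • ee φ

variable (φ) in
/-- the cosets `(ab)^m Σ` -/
noncomputable def rr (m : ℕ) : Q φ := ((elA φ a0 * elB φ b0) ^ m) • ee φ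

omit ha hb hinj in
lemma conj_pow (d : ℕ) :
    (elA φ a0)⁻¹ * ((elA φ a0 * elB φ b0) ^ d * elA φ a0) = (elB φ b0 * elA φ a0) ^ d := by
  rw [← semiA, inv_mul_cancel_left]

lemma qq_inj {m j : ℕ} (h : qq φ a0 b0 m = qq φ a0 b0 j) : m = j := by
  by_contra hne
  wlog hlt : m < j generalizing m j
  · exact this h.symm (Ne.symm hne) (by omega)
  rw [qq, qq, smul_ee, smul_ee, QuotientGroup.eq] at h
  have hj : (elA φ a0 * elB φ b0) ^ j =
      (elA φ a0 * elB φ b0) ^ m * (elA φ a0 * elB φ b0) ^ (j - m) := by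
    rw [← pow_add]; congr 1; omega
  rw [hj] at h
  have hcalc : ((elA φ a0 * elB φ b0) ^ m * elA φ a0)⁻¹ *
      ((elA φ a0 * elB φ b0) ^ m * (elA φ a0 * elB φ b0) ^ (j - m) * elA φ a0) =
      (elB φ b0 * elA φ a0) ^ (j - m) := by
    rw [← conj_pow a0 b0 (j - m)]
    group
  rw [hcalc] at h
  exact notmem_BA a0 b0 ha hb hinj _ (by omega) h

lemma rr_ne_qq (m j : ℕ) : rr φ a0 b0 (m + 1) ≠ qq φ a0 b0 j := by
  intro h
  rw [qq, rr, smul_ee, smul_ee, QuotientGroup.eq] at h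
  rcases le_or_gt (m + 1) j with hle | hlt
  · have hj : (elA φ a0 * elB φ b0) ^ j =
        (elA φ a0 * elB φ b0) ^ (m+1) * (elA φ a0 * elB φ b0) ^ (j - (m+1)) := by
      rw [← pow_add]; congr 1; omega
    rw [hj] at h
    have hcalc : ((elA φ a0 * elB φ b0) ^ (m+1))⁻¹ *
        ((elA φ a0 * elB φ b0) ^ (m+1) * (elA φ a0 * elB φ b0) ^ (j - (m+1)) * elA φ a0) =
        (elA φ a0 * elB φ b0) ^ (j - (m+1)) * elA φ a0 := by group
    rw [hcalc] at h
    exact notmem_ABA a0 b0 ha hb hinj _ h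
  · have h' := inv_mem h
    rw [mul_inv_rev, inv_inv] at h'
    have hm : (elA φ a0 * elB φ b0) ^ (m+1) =
        (elA φ a0 * elB φ b0) ^ j * (elA φ a0 * elB φ b0) ^ (m + 1 - j) := by
      rw [← pow_add]; congr 1; omega
    rw [hm] at h'
    have hcalc : ((elA φ a0 * elB φ b0) ^ j * elA φ a0)⁻¹ *
        ((elA φ a0 * elB φ b0) ^ j * (elA φ a0 * elB φ b0) ^ (m + 1 - j)) =
        (elA φ a0)⁻¹ * (elA φ a0 * elB φ b0) ^ (m + 1 - j) := by group
    rw [hcalc] at h'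
    have hstep : (elA φ a0)⁻¹ * (elA φ a0 * elB φ b0) ^ (m + 1 - j) =
        (elB φ b0 * elA φ a0) ^ (m - j) * elB φ b0 := by
      rw [show m + 1 - j = (m - j) + 1 by omega, pow_succ',
        mul_assoc (elA φ a0) (elB φ b0), inv_mul_cancel_left, semiB]
    rw [hstep] at h'
    exact notmem_BAB a0 b0 ha hb hinj _ h'

omit ha hb hinj in
lemma cv_X : cv φ (elA φ a0 * elB φ b0) = dd φ (qq φ a0 b0 0) - dd φ (rr φ a0 b0 1) := by
  have h1 : cv φ (elA φ a0) = 0 := cv_a φ a0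
  have h2 : cv φ (elB φ b0) = dd φ (ee φ) - dd φ (elB φ b0 • ee φ) := cv_b φ b0
  rw [cv_mul, h1, h2, sm_sub, sm_dd, sm_dd, qq, rr, pow_zero, one_mul, pow_one, mul_smul,
    zero_add]

omit ha hb hinj in
lemma cv_pow (n : ℕ) : cv φ ((elA φ a0 * elB φ b0) ^ n) =
    ∑ m ∈ Finset.range n, (dd φ (qq φ a0 b0 m) - dd φ (rr φ a0 b0 (m+1))) := by
  induction n with
  | zero => simp [cv_one]
  | succ n ih =>
    have h1 : (elA φ a0 * elB φ b0) ^ n • qq φ a0 b0 0 = qq φ a0 b0 n := by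
      rw [qq, qq, pow_zero, one_mul, ← mul_smul]
    have h2 : (elA φ a0 * elB φ b0) ^ n • rr φ a0 b0 1 = rr φ a0 b0 (n+1) := by
      rw [rr, rr, pow_one, ← mul_smul, ← pow_succ]
    rw [pow_succ, cv_mul, ih, cv_X a0 b0, sm_sub, sm_dd, sm_dd, h1, h2, Finset.sum_range_succ]

lemma cv_eval (n j : ℕ) (hj : j < n) :
    cv φ ((elA φ a0 * elB φ b0) ^ n) (qq φ a0 b0 j) = 1 := by
  classical
  rw [cv_pow a0 b0, Finsupp.finset_sum_apply, Finset.sum_eq_single j]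
  · simp [dd, Finsupp.single_apply, rr_ne_qq a0 b0 ha hb hinj j j]
  · intro m hm hne
    have h1 : qq φ a0 b0 m ≠ qq φ a0 b0 j := fun hc => hne (qq_inj a0 b0 ha hb hinj hc)
    simp [dd, Finsupp.single_apply, h1, rr_ne_qq a0 b0 ha hb hinj m j]
  · intro hj'; exact absurd (Finset.mem_range.2 hj) hj'

end Main

end Stmt15Aux

open scoped ENNReal

/-- a nontrivial amalgamated free product `Γ = Γ₁ ∗_Σ Γ₂` (the pushout of
two injective homomorphisms `φ i : Σ → Γᵢ`, indexed by `i : Bool`, with proper images)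
admits an unbounded 1-cocycle `c : Γ → ℓ²_ℝ(Γ/Σ)` for the quasi-regular orthogonal
representation `(π(g)f)(xΣ) = f(g⁻¹xΣ)`; the cocycle identity `c(gh) = c(g) + π(g)c(h)`
is expressed pointwise. -/
theorem stmt15 (B : Type*) [Group B] [Countable B]
    (G : Bool → Type*) [∀ i, Group (G i)] [∀ i, Countable (G i)]
    (φ : ∀ i, B →* G i)
    (hinj : ∀ i, Function.Injective (φ i))
    (hproper : ∀ i, (φ i).range ≠ ⊤) :
    ∃ c : Monoid.PushoutI φ →
        lp (fun _ : Monoid.PushoutI φ ⧸ (Monoid.PushoutI.base φ).range => ℝ) 2,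
      (∀ (g h : Monoid.PushoutI φ)
        (k : Monoid.PushoutI φ ⧸ (Monoid.PushoutI.base φ).range),
        c (g * h) k = c g k + c h (g⁻¹ • k)) ∧
      ¬ BddAbove (Set.range fun g : Monoid.PushoutI φ => ‖c g‖) := by
  classical
  obtain ⟨a0, ha⟩ : ∃ x, x ∉ (φ false).range := by
    by_contra hcon; push_neg at hcon
    exact hproper false ((Subgroup.eq_top_iff' _).2 hcon)
  obtain ⟨b0, hb⟩ : ∃ x, x ∉ (φ true).range := by
    by_contra hcon; push_neg at hcon
    exact hproper true ((Subgroup.eq_top_iff' _).2 hcon)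
  have hmem : ∀ x : Monoid.PushoutI φ,
      Memℓp (fun k : Monoid.PushoutI φ ⧸ (Monoid.PushoutI.base φ).range =>
        Stmt15Aux.cv φ x k) 2 := by
    intro x
    apply memℓp_gen
    apply summable_of_ne_finset_zero (s := (Stmt15Aux.cv φ x).support)
    intro k hk
    rw [Finsupp.notMem_support_iff.1 hk]
    rw [norm_zero, Real.zero_rpow (by norm_num)]
  set c : Monoid.PushoutI φ →
      lp (fun _ : Monoid.PushoutI φ ⧸ (Monoid.PushoutI.base φ).range => ℝ) 2 :=
    fun x => ⟨fun k => Stmt15Aux.cv φ x k, hmem x⟩ with hc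
  refine ⟨c, fun g h k => Stmt15Aux.cv_cocycle φ g h k, ?_⟩
  rintro ⟨M, hM⟩
  have hMg : ∀ g : Monoid.PushoutI φ, ‖c g‖ ≤ M := fun g => hM ⟨g, rfl⟩
  have key : ∀ n : ℕ, (n : ℝ) ≤ M ^ (2 : ℝ≥0∞).toReal := by
    intro n
    set g : Monoid.PushoutI φ := (Stmt15Aux.elA φ a0 * Stmt15Aux.elB φ b0) ^ n with hg
    have hbound := lp.sum_rpow_le_norm_rpow (E := fun _ : Monoid.PushoutI φ ⧸
        (Monoid.PushoutI.base φ).range => ℝ) (p := 2)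
        (by norm_num) (c g) ((Finset.range n).image (Stmt15Aux.qq φ a0 b0))
    have hsum : ∑ k ∈ (Finset.range n).image (Stmt15Aux.qq φ a0 b0),
        ‖(c g) k‖ ^ (2 : ℝ≥0∞).toReal = n := by
      rw [Finset.sum_image
        (fun x _ y _ hxy => Stmt15Aux.qq_inj a0 b0 ha hb hinj hxy)]
      have heach : ∀ j ∈ Finset.range n,
          ‖(c g) (Stmt15Aux.qq φ a0 b0 j)‖ ^ (2 : ℝ≥0∞).toReal = 1 := by
        intro j hj
        have hv : (c g) (Stmt15Aux.qq φ a0 b0 j) = 1 :=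
          Stmt15Aux.cv_eval a0 b0 ha hb hinj n j (Finset.mem_range.1 hj)
        rw [hv, norm_one, Real.one_rpow]
      rw [Finset.sum_congr rfl heach]
      simp
    have h2 : ‖c g‖ ^ (2 : ℝ≥0∞).toReal ≤ M ^ (2 : ℝ≥0∞).toReal :=
      Real.rpow_le_rpow (norm_nonneg _) (hMg g) ENNReal.toReal_nonneg
    calc (n : ℝ) = _ := hsum.symm
      _ ≤ ‖c g‖ ^ (2 : ℝ≥0∞).toReal := hbound
      _ ≤ M ^ (2 : ℝ≥0∞).toReal := h2
  obtain ⟨n, hn⟩ := exists_nat_gt (M ^ (2 : ℝ≥0∞).toReal)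
  linarith [key n]
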